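/- For every function f : (M×M)∖D → [0,∞] satisfying f(j,l) ≤ max(f(j,k), f(k,l)) for all pairwise distinct j, k, l ∈ M, there exists exactly one Y ∈ 𝒴 with f_Y = f; namely Y(t) = D ∪ {(j,k) : j ≠ k, f(j,k) < t}. Hence Y ↦ f_Y is a bijection from 𝒴 onto 𝒴̃ := {f : (M×M)∖D → [0,∞] : f(j,l) ≤ max(f(j,k), f(k,l)) for all pairwise distinct j,k,l}. -/

import Mathlib

open Set NNReal ENNReal

/-- A "partial order" on `M`: a reflexive and transitive (not necessarily
antisymmetric) relation, identified with a subset of `M × M`. -/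
def IsPO {M : Type*} (V : Set (M × M)) : Prop :=
  (∀ j : M, (j, j) ∈ V) ∧ ∀ j k l : M, (j, k) ∈ V → (k, l) ∈ V → (j, l) ∈ V

/-- The diagonal relation `D`. -/
def diagRel (M : Type*) : Set (M × M) := {p : M × M | p.1 = p.2}

/-- The smallest partial order containing `S` (reflexive-transitive closure). -/
def poGen {M : Type*} (S : Set (M × M)) : Set (M × M) :=
  ⋂₀ {V : Set (M × M) | IsPO V ∧ S ⊆ V}

/-- The join of two partial orders: the smallest partial order containing their union. -/
def poJoin {M : Type*} (V W : Set (M × M)) : Set (M × M) := poGen (V ∪ W)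

/-- Membership in `𝒴`: maps `Y : [0,∞) → {partial orders on M}` with `Y 0 = D`,
increasing, and left-continuous. -/
def MemY {M : Type*} (Y : ℝ≥0 → Set (M × M)) : Prop :=
  (∀ t : ℝ≥0, IsPO (Y t)) ∧ Y 0 = diagRel M ∧
    (∀ s t : ℝ≥0, s ≤ t → Y s ⊆ Y t) ∧
    ∀ t : ℝ≥0, 0 < t → Y t = ⋃ s ∈ Set.Iio t, Y s

/-- The pointwise join on `𝒴`. -/
def joinY {M : Type*} (Y Z : ℝ≥0 → Set (M × M)) : ℝ≥0 → Set (M × M) :=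
  fun t => poJoin (Y t) (Z t)

/-- The switching-time function `f_Y` with values in `[0,∞]` (`inf ∅ = ∞`). -/
noncomputable def fY {M : Type*} (Y : ℝ≥0 → Set (M × M)) (p : M × M) : ℝ≥0∞ :=
  ⨅ (s : ℝ≥0) (_ : p ∈ Y s), (s : ℝ≥0∞)

/-- The off-diagonal pairs `(M × M) ∖ D`. -/
abbrev OffDiag (M : Type*) : Type _ := {p : M × M // p.1 ≠ p.2}

/-- The set `𝒴̃` of ultrametric-type functions on off-diagonal pairs. -/
def tildeY (M : Type*) : Set (OffDiag M → ℝ≥0∞) :=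
  {f | ∀ (j k l : M) (hjk : j ≠ k) (hkl : k ≠ l) (hjl : j ≠ l),
    f ⟨(j, l), hjl⟩ ≤ max (f ⟨(j, k), hjk⟩) (f ⟨(k, l), hkl⟩)}

/-- The switching-time function restricted to off-diagonal pairs. -/
noncomputable def fYo {M : Type*} (Y : ℝ≥0 → Set (M × M)) : OffDiag M → ℝ≥0∞ :=
  fun p => fY Y p.1

section myaux
variable {M : Type*}

lemma fY_lt_iff {Y : ℝ≥0 → Set (M × M)} (hY : MemY Y) {p : M × M} (hp : p.1 ≠ p.2)
    {t : ℝ≥0} : fY Y p < (t : ℝ≥0∞) ↔ p ∈ Y t := by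
  constructor
  · intro h
    rw [fY] at h
    obtain ⟨s, hs⟩ := iInf_lt_iff.1 h
    obtain ⟨hps, hst⟩ := iInf_lt_iff.1 hs
    exact hY.2.2.1 s t (le_of_lt (by exact_mod_cast hst)) hps
  · intro h
    have ht : 0 < t := by
      rcases (zero_le : (0 : ℝ≥0) ≤ t).eq_or_lt with h0 | h0
      · exfalso; rw [← h0, hY.2.1] at h; exact hp h
      · exact h0
    rw [hY.2.2.2 t ht] at h
    obtain ⟨s, hs, hps⟩ := Set.mem_iUnion₂.1 h
    calc fY Y p ≤ (s : ℝ≥0∞) := iInf₂_le s hps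
      _ < t := by exact_mod_cast hs

/-- The candidate preimage. -/
def Yf (f : OffDiag M → ℝ≥0∞) : ℝ≥0 → Set (M × M) :=
  fun t => diagRel M ∪ {p : M × M | ∃ h : p.1 ≠ p.2, f ⟨p, h⟩ < (t : ℝ≥0∞)}

lemma memY_Yf {f : OffDiag M → ℝ≥0∞} (hf : f ∈ tildeY M) : MemY (Yf f) := by
  refine ⟨fun t => ⟨fun j => Or.inl rfl, ?_⟩, ?_, ?_, ?_⟩
  · rintro j k l (hjk | ⟨hjk, hjk'⟩) hkl
    · simp only [diagRel, Set.mem_setOf_eq] at hjk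
      cases hjk; exact hkl
    · rcases hkl with hkl | ⟨hkl, hkl'⟩
      · simp only [diagRel, Set.mem_setOf_eq] at hkl
        cases hkl; exact Or.inr ⟨hjk, hjk'⟩
      · by_cases hjl : j = l
        · exact Or.inl hjl
        · exact Or.inr ⟨hjl, lt_of_le_of_lt (hf j k l hjk hkl hjl) (max_lt hjk' hkl')⟩
  · ext p
    simp only [Yf, diagRel, Set.mem_union, Set.mem_setOf_eq, ENNReal.coe_zero]
    constructor
    · rintro (h | ⟨h, h'⟩)
      · exact h
      · exact absurd h' (by simp)
    · exact Or.inl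
  · rintro s t hst p (hp | ⟨hp, hp'⟩)
    · exact Or.inl hp
    · exact Or.inr ⟨hp, lt_of_lt_of_le hp' (by exact_mod_cast hst)⟩
  · intro t ht
    ext p
    simp only [Set.mem_iUnion₂]
    constructor
    · rintro (hp | ⟨hp, hp'⟩)
      · exact ⟨0, ht, Or.inl hp⟩
      · obtain ⟨s, hs1, hs2⟩ := ENNReal.lt_iff_exists_nnreal_btwn.1 hp'
        exact ⟨s, by exact_mod_cast hs2, Or.inr ⟨hp, hs1⟩⟩
    · rintro ⟨s, hs, hp | ⟨hp, hp'⟩⟩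
      · exact Or.inl hp
      · exact Or.inr ⟨hp, lt_trans hp' (by exact_mod_cast hs)⟩

lemma fYo_Yf (f : OffDiag M → ℝ≥0∞) : fYo (Yf f) = f := by
  funext p
  obtain ⟨⟨j, k⟩, hjk⟩ := p
  apply le_antisymm
  · -- fY (Yf f) (j,k) ≤ f p : approximate from above
    refine ENNReal.le_of_forall_pos_le_add fun ε hε hlt => ?_
    have hmem : (j, k) ∈ Yf f ((f ⟨(j, k), hjk⟩).toNNReal + ε) := by
      refine Or.inr ⟨hjk, ?_⟩
      rw [ENNReal.coe_add, ENNReal.coe_toNNReal hlt.ne]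
      exact ENNReal.lt_add_right hlt.ne (by exact_mod_cast hε.ne')
    calc fYo (Yf f) ⟨(j, k), hjk⟩ ≤ (((f ⟨(j, k), hjk⟩).toNNReal + ε : ℝ≥0) : ℝ≥0∞) := by
          unfold fYo fY; exact iInf₂_le ((f ⟨(j, k), hjk⟩).toNNReal + ε) hmem
      _ = f ⟨(j, k), hjk⟩ + ε := by
          rw [ENNReal.coe_add, ENNReal.coe_toNNReal hlt.ne]
  · refine le_iInf₂ fun s hs => ?_
    rcases hs with hs | ⟨_, hs'⟩
    · exact absurd hs hjk
    · exact hs'.le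

lemma eq_Yf {Y : ℝ≥0 → Set (M × M)} (hY : MemY Y) : Y = Yf (fYo Y) := by
  funext t
  ext p
  by_cases hp : p.1 = p.2
  · have hpd : p ∈ diagRel M := hp
    have : p ∈ Y t := by
      have := (hY.1 t).1 p.1
      rwa [show (p.1, p.1) = p from Prod.ext rfl hp] at this
    simp only [Yf, Set.mem_union]
    exact iff_of_true this (Or.inl hpd)
  · simp only [Yf, Set.mem_union, Set.mem_setOf_eq]
    constructor
    · intro h
      exact Or.inr ⟨hp, (fY_lt_iff hY hp).2 h⟩
    · rintro (h | ⟨h, h'⟩)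
      · exact absurd h hp
      · exact (fY_lt_iff hY hp).1 h'

end myaux

/-- Every `f ∈ 𝒴̃` has exactly one preimage under `Y ↦ f_Y`, namely
`Y(t) = D ∪ {(j,k) : j ≠ k, f(j,k) < t}`; hence `Y ↦ f_Y` is a bijection
from `𝒴` onto `𝒴̃`. -/
theorem fY_bijection {M : Type*} [Countable M] [Infinite M] :
    (∀ f : OffDiag M → ℝ≥0∞, f ∈ tildeY M →
      (MemY (fun t : ℝ≥0 =>
          diagRel M ∪ {p : M × M | ∃ h : p.1 ≠ p.2, f ⟨p, h⟩ < (t : ℝ≥0∞)}) ∧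
        fYo (fun t : ℝ≥0 =>
          diagRel M ∪ {p : M × M | ∃ h : p.1 ≠ p.2, f ⟨p, h⟩ < (t : ℝ≥0∞)}) = f) ∧
      ∃! Y : ℝ≥0 → Set (M × M), MemY Y ∧ fYo Y = f) ∧
    Set.BijOn (fun Y : ℝ≥0 → Set (M × M) => fYo Y) {Y | MemY Y} (tildeY M) := by
  have hmaps : ∀ Y : ℝ≥0 → Set (M × M), MemY Y → fYo Y ∈ tildeY M := by
    intro Y hY j k l hjk hkl hjl
    set b := max (fYo Y ⟨(j, k), hjk⟩) (fYo Y ⟨(k, l), hkl⟩) with hb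
    refine ENNReal.le_of_forall_pos_le_add fun ε hε hlt => ?_
    set s : ℝ≥0 := b.toNNReal + ε with hsdef
    have hbs : b < (s : ℝ≥0∞) := by
      rw [hsdef, ENNReal.coe_add, ENNReal.coe_toNNReal hlt.ne]
      exact ENNReal.lt_add_right hlt.ne (by exact_mod_cast hε.ne')
    have h1 : (j, k) ∈ Y s :=
      (fY_lt_iff hY hjk).1 (lt_of_le_of_lt (le_max_left _ _) hbs)
    have h2 : (k, l) ∈ Y s :=
      (fY_lt_iff hY hkl).1 (lt_of_le_of_lt (le_max_right _ _) hbs)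
    have h3 : (j, l) ∈ Y s := (hY.1 s).2 j k l h1 h2
    calc fYo Y ⟨(j, l), hjl⟩ ≤ (s : ℝ≥0∞) := by
          unfold fYo fY; exact iInf₂_le s h3
      _ = b + ε := by rw [hsdef, ENNReal.coe_add, ENNReal.coe_toNNReal hlt.ne]
  constructor
  · intro f hf
    have h1 : MemY (Yf f) := memY_Yf hf
    have h2 : fYo (Yf f) = f := fYo_Yf f
    refine ⟨⟨h1, h2⟩, ⟨Yf f, ⟨h1, h2⟩, ?_⟩⟩
    rintro Y ⟨hY, hYf⟩
    rw [eq_Yf hY, hYf]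
  · refine ⟨fun Y hY => hmaps Y hY, ?_, ?_⟩
    · intro Y1 hY1 Y2 hY2 h
      rw [eq_Yf hY1, eq_Yf hY2]
      simp only at h
      rw [h]
    · intro f hf
      exact ⟨Yf f, memY_Yf hf, fYo_Yf f⟩
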